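/- The submonoid M of ℤ₊³ generated by (2,0,0), (0,2,0), (0,0,2), (1,0,1), (0,1,1) is seminormal but not normal. -/

import Mathlib

private lemma mem_iff4 (M : AddSubmonoid (Fin 3 → ℤ))
    (hM : M = AddSubmonoid.closure
      {![2, 0, 0], ![0, 2, 0], ![0, 0, 2], ![1, 0, 1], ![0, 1, 1]}) (z : Fin 3 → ℤ) :
    z ∈ M ↔ 0 ≤ z 0 ∧ 0 ≤ z 1 ∧ z 0 % 2 + z 1 % 2 ≤ z 2 ∧ (z 0 + z 1 + z 2) % 2 = 0 := by
  subst hM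
  constructor
  · intro h
    induction h using AddSubmonoid.closure_induction with
    | mem x hx =>
      simp only [Set.mem_insert_iff, Set.mem_singleton_iff] at hx
      rcases hx with h | h | h | h | h <;> subst h <;>
        simp [Matrix.cons_val_zero, Matrix.cons_val_one, Matrix.head_cons]
    | zero => simp
    | add x y hx hy ihx ihy =>
      simp only [Pi.add_apply] at *
      omega
  · rintro ⟨h0, h1, h2, h3⟩
    have g1 : (![2,0,0] : Fin 3 → ℤ) ∈ AddSubmonoid.closure
        {![2, 0, 0], ![0, 2, 0], ![0, 0, 2], ![1, 0, 1], ![0, 1, 1]} :=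
      AddSubmonoid.subset_closure (by simp)
    have g2 : (![0,2,0] : Fin 3 → ℤ) ∈ AddSubmonoid.closure
        {![2, 0, 0], ![0, 2, 0], ![0, 0, 2], ![1, 0, 1], ![0, 1, 1]} :=
      AddSubmonoid.subset_closure (by simp)
    have g3 : (![0,0,2] : Fin 3 → ℤ) ∈ AddSubmonoid.closure
        {![2, 0, 0], ![0, 2, 0], ![0, 0, 2], ![1, 0, 1], ![0, 1, 1]} :=
      AddSubmonoid.subset_closure (by simp)
    have g4 : (![1,0,1] : Fin 3 → ℤ) ∈ AddSubmonoid.closure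
        {![2, 0, 0], ![0, 2, 0], ![0, 0, 2], ![1, 0, 1], ![0, 1, 1]} :=
      AddSubmonoid.subset_closure (by simp)
    have g5 : (![0,1,1] : Fin 3 → ℤ) ∈ AddSubmonoid.closure
        {![2, 0, 0], ![0, 2, 0], ![0, 0, 2], ![1, 0, 1], ![0, 1, 1]} :=
      AddSubmonoid.subset_closure (by simp)
    set a : ℕ := (z 0 / 2).toNat with ha
    set b : ℕ := (z 1 / 2).toNat with hb
    set c : ℕ := ((z 2 - z 0 % 2 - z 1 % 2) / 2).toNat with hc
    set d : ℕ := (z 0 % 2).toNat with hd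
    set e : ℕ := (z 1 % 2).toNat with he
    have hz : z = a • ![2,0,0] + b • ![0,2,0] + c • ![0,0,2] + d • ![1,0,1] + e • ![0,1,1] := by
      funext i
      fin_cases i <;>
        simp only [Pi.add_apply, Pi.smul_apply] <;>
        simp [nsmul_eq_mul] <;> omega
    rw [hz]
    exact add_mem (add_mem (add_mem (add_mem (AddSubmonoid.nsmul_mem _ g1 a)
      (AddSubmonoid.nsmul_mem _ g2 b)) (AddSubmonoid.nsmul_mem _ g3 c))
      (AddSubmonoid.nsmul_mem _ g4 d)) (AddSubmonoid.nsmul_mem _ g5 e)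

/-- The submonoid of `ℤ₊³` generated by `(2,0,0)`, `(0,2,0)`, `(0,0,2)`, `(1,0,1)`,
`(0,1,1)` is seminormal but not normal. -/
theorem stmt4 (M : AddSubmonoid (Fin 3 → ℤ))
    (hM : M = AddSubmonoid.closure
      {![2, 0, 0], ![0, 2, 0], ![0, 0, 2], ![1, 0, 1], ![0, 1, 1]}) :
    (∀ z : Fin 3 → ℤ, z ∈ AddSubgroup.closure (M : Set (Fin 3 → ℤ)) →
      2 • z ∈ M → 3 • z ∈ M → z ∈ M) ∧
    ¬ (∀ z : Fin 3 → ℤ, z ∈ AddSubgroup.closure (M : Set (Fin 3 → ℤ)) →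
      (∃ t : ℕ, 0 < t ∧ t • z ∈ M) → z ∈ M) := by
  constructor
  · intro z _ h2 h3
    rw [mem_iff4 M hM] at h2 h3 ⊢
    simp only [Pi.smul_apply, nsmul_eq_mul] at h2 h3
    push_cast at h2 h3
    omega
  · intro h
    have hg4 : (![1,0,1] : Fin 3 → ℤ) ∈ M := by rw [mem_iff4 M hM]; norm_num [Matrix.cons_val_two]
    have hg5 : (![0,1,1] : Fin 3 → ℤ) ∈ M := by rw [mem_iff4 M hM]; norm_num [Matrix.cons_val_two]
    have hg3 : (![0,0,2] : Fin 3 → ℤ) ∈ M := by rw [mem_iff4 M hM]; norm_num [Matrix.cons_val_two]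
    have hzK : (![1,1,0] : Fin 3 → ℤ) ∈ AddSubgroup.closure (M : Set (Fin 3 → ℤ)) := by
      have : (![1,1,0] : Fin 3 → ℤ) = ![1,0,1] + ![0,1,1] - ![0,0,2] := by
        funext i; fin_cases i <;> simp
      rw [this]
      exact sub_mem (add_mem (AddSubgroup.subset_closure hg4)
        (AddSubgroup.subset_closure hg5)) (AddSubgroup.subset_closure hg3)
    have h2 : (2 : ℕ) • (![1,1,0] : Fin 3 → ℤ) ∈ M := by
      rw [mem_iff4 M hM]
      simp only [Pi.smul_apply, nsmul_eq_mul]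
      norm_num [Matrix.cons_val_two]
    have := h ![1,1,0] hzK ⟨2, by norm_num, h2⟩
    rw [mem_iff4 M hM] at this
    norm_num [Matrix.cons_val_two] at this
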